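/- For F₁(x) = x·log(x + √(1+x²)) − √(1+x²) + 1 and F₂(x) = k·x·log(x) with fixed k > e, one has F₁ ≻ F₂; i.e., there exists b > 0 such that F₁(bx) ≥ F₂(x) for all x > 0. -/
import Mathlib


/-- For F₁(x) = x·log(x+√(1+x²)) − √(1+x²) + 1 and F₂(x) = k·x·log x with k > e,
one has F₁ ≻ F₂. -/
theorem stmt5 (k : ℝ) (hk : Real.exp 1 < k) :
    ∃ b : ℝ, 0 < b ∧ ∀ x : ℝ, 0 < x →
      k * x * Real.log x ≤
        (b * x) * Real.log (b * x + Real.sqrt (1 + (b * x) ^ 2))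
          - Real.sqrt (1 + (b * x) ^ 2) + 1 := by
  have hk0 : (0:ℝ) < k := lt_trans (Real.exp_pos 1) hk
  refine ⟨k, hk0, fun x hx => ?_⟩
  set y := k * x with hy
  have hy0 : 0 < y := mul_pos hk0 hx
  have hs_nonneg : (0:ℝ) ≤ 1 + y ^ 2 := by positivity
  have hsq := Real.sq_sqrt hs_nonneg
  have hsn := Real.sqrt_nonneg (1 + y ^ 2)
  have h1 : y ≤ Real.sqrt (1 + y ^ 2) := by nlinarith
  have h2 : Real.sqrt (1 + y ^ 2) ≤ 1 + y := by nlinarith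
  have hlog : Real.log (2 * y) ≤ Real.log (y + Real.sqrt (1 + y ^ 2)) :=
    Real.log_le_log (by linarith) (by linarith)
  have key : y * Real.log (2 * y) - y ≤
      y * Real.log (y + Real.sqrt (1 + y ^ 2)) - Real.sqrt (1 + y ^ 2) + 1 := by
    have := mul_le_mul_of_nonneg_left hlog hy0.le
    linarith
  refine le_trans ?_ key
  have hexp : Real.log 2 + Real.log k - 1 > 0 := by
    have hlk : 1 < Real.log k := by
      have := Real.log_lt_log (Real.exp_pos 1) hk
      simpa [Real.log_exp] using this
    have h2 : (0:ℝ) < Real.log 2 := Real.log_pos (by norm_num)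
    linarith
  have hexpand : Real.log (2 * y) = Real.log 2 + Real.log k + Real.log x := by
    rw [hy, Real.log_mul (by norm_num) (by positivity),
        Real.log_mul (ne_of_gt hk0) (ne_of_gt hx)]
    ring
  rw [hexpand, hy]
  nlinarith [mul_pos hk0 hx]
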